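/- arXiv:math/0404148 — 5 statements merged into one kernel-verified Lean document; each statement's English description precedes it below -/
import Mathlib

section
/- Let I be an infinite set, U an ultrafilter on I, ⟨A_i : i ∈ I⟩ a family of nonempty sets, and k a natural number. Given a k-dimensional choice function on the ultraproduct A = ∏_{i∈I} A_i / U, the family F = { R ⊆ ᵏA : for every a ∈ ᵏA, T(R,a) ∈ U implies a ∈ R } contains the empty set and ᵏA, is closed under finite unions, and is closed under arbitrary intersections; hence F is the family of closed sets of a topology on ᵏA (the ultratopology induced by the choice function). -/
open Set

/-- The setoid on the product `∀ i, A i` identifying functions that agree on a set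
in the ultrafilter `U`; its quotient is the ultraproduct `∏ A i / U`. -/
def upSetoid {I : Type*} (U : Ultrafilter I) (A : I → Type*) : Setoid (∀ i, A i) where
  r f g := {i | f i = g i} ∈ U
  iseqv := by
    refine ⟨fun f => ?_, fun {f g} h => ?_, fun {f g h} hfg hgh => ?_⟩
    · exact Filter.univ_mem' fun i => rfl
    · exact Filter.mem_of_superset h fun i hi => (hi : f i = g i).symm
    · exact Filter.mem_of_superset (Filter.inter_mem hfg hgh) fun i hi =>
        (hi.1 : f i = g i).trans hi.2

/-- Given a "hat" map `c` assigning to each point of `Y` a representative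
in `∀ i, X i`, the set `T(R, a) = { i ∈ I : ∃ b ∈ R, b̂(i) = â(i) }`. -/
def tset {I : Type*} {X : I → Type*} {Y : Type*} (c : Y → ∀ i, X i)
    (R : Set Y) (a : Y) : Set I :=
  {i | ∃ b ∈ R, c b i = c a i}

/-- The ultratopology induced by the hat map `c`: closed sets are exactly the
`R` such that `T(R,a) ∈ U` implies `a ∈ R`. -/
def ultraTop {I : Type*} (U : Ultrafilter I) {X : I → Type*} {Y : Type*}
    (c : Y → ∀ i, X i) : TopologicalSpace Y :=
  TopologicalSpace.ofClosed {R | ∀ a, tset c R a ∈ U → a ∈ R}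
    (by
      intro a ha
      have h : tset c (∅ : Set Y) a = ∅ := by ext i; simp [tset]
      rw [h] at ha
      exact absurd ha (Filter.empty_notMem _))
    (by
      intro S hS a ha
      exact Set.mem_sInter.2 fun R hR => hS hR a
        (Filter.mem_of_superset ha fun i hi => by
          obtain ⟨b, hb, he⟩ := hi
          exact ⟨b, hb R hR, he⟩))
    (by
      intro R hR S hS a ha
      have h : tset c (R ∪ S) a = tset c R a ∪ tset c S a := by
        ext i; simp [tset, Set.mem_union, or_and_right, exists_or]
      rw [h] at ha
      rcases (Ultrafilter.union_mem_iff.1 ha) with h' | h'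
      · exact Or.inl (hR a h')
      · exact Or.inr (hS a h'))

/-- Given a `k`-dimensional choice function on the ultraproduct
`A = ∏ᵢ Aᵢ / U` of an `I`-indexed family of nonempty sets (`I` infinite),
the family `F = { R ⊆ ᵏA : ∀ a, T(R,a) ∈ U → a ∈ R }` contains `∅` and `ᵏA`,
is closed under finite (binary) unions and arbitrary intersections; hence it is
the family of closed sets of a topology on `ᵏA`. -/
theorem ultratopology_exists {I : Type*} [Infinite I] (U : Ultrafilter I)
    (A : I → Type*) [∀ i, Nonempty (A i)] (k : ℕ)
    (c : (Fin k → Quotient (upSetoid U A)) → ∀ i, Fin k → A i)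
    (hc : ∀ a j, Quotient.mk (upSetoid U A) (fun i => c a i j) = a j) :
    (∅ : Set (Fin k → Quotient (upSetoid U A))) ∈
        {R | ∀ a, tset c R a ∈ U → a ∈ R} ∧
    (Set.univ : Set (Fin k → Quotient (upSetoid U A))) ∈
        {R | ∀ a, tset c R a ∈ U → a ∈ R} ∧
    (∀ R ∈ {R | ∀ a, tset c R a ∈ U → a ∈ R},
      ∀ S ∈ {R | ∀ a, tset c R a ∈ U → a ∈ R},
        R ∪ S ∈ {R | ∀ a, tset c R a ∈ U → a ∈ R}) ∧
    (∀ S ⊆ {R | ∀ a, tset c R a ∈ U → a ∈ R},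
        ⋂₀ S ∈ {R | ∀ a, tset c R a ∈ U → a ∈ R}) ∧
    (∃ t : TopologicalSpace (Fin k → Quotient (upSetoid U A)),
        ∀ R, @IsClosed _ t R ↔ R ∈ {R | ∀ a, tset c R a ∈ U → a ∈ R}) := by
  refine ⟨fun a ha => ?_, fun a _ => trivial, fun R hR S hS a ha => ?_, fun S hS a ha => ?_, ?_⟩
  · have h : tset c (∅ : Set _) a = ∅ := by ext i; simp [tset]
    rw [h] at ha
    exact absurd ha (Filter.empty_notMem _)
  · have h : tset c (R ∪ S) a = tset c R a ∪ tset c S a := by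
      ext i; simp [tset, Set.mem_union, or_and_right, exists_or]
    rw [h] at ha
    rcases (Ultrafilter.union_mem_iff.1 ha) with h' | h'
    · exact Or.inl (hR a h')
    · exact Or.inr (hS a h')
  · exact Set.mem_sInter.2 fun R hR => hS hR a
      (Filter.mem_of_superset ha fun i hi => by
        obtain ⟨b, hb, he⟩ := hi
        exact ⟨b, hb R hR, he⟩)
  · letI t := ultraTop U c
    refine ⟨t, fun R => ?_⟩
    have h : @IsClosed _ t R ↔ Rᶜᶜ ∈ {R | ∀ a, tset c R a ∈ U → a ∈ R} :=
      ⟨fun h => h.isOpen_compl, fun h => ⟨h⟩⟩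
    rw [h, compl_compl]
end

section
/- Let I be a set, U an ultrafilter on I, ⟨A_i : i ∈ I⟩ a family of nonempty sets, and k a natural number. Let ĥ be a k-dimensional choice function on A = ∏_{i∈I} A_i / U with induced ultratopology C on ᵏA, and let B = ∏_{i∈I} ᵏA_i / U. Then there exists a 1-dimensional choice function on B whose induced ultratopology D on B is homeomorphic to C; indeed, the natural bijection φ : ᵏA → B given by φ(⟨s⁰/U, …, s^{k−1}/U⟩) = ⟨⟨s⁰(i), …, s^{k−1}(i)⟩ : i ∈ I⟩ / U is a homeomorphism from (ᵏA, C) onto (B, D). -/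
open Set

/-- Given a `k`-dimensional choice function `c` on
`A = ∏ᵢ Aᵢ / U` with induced ultratopology `C` on `ᵏA`, there is a
1-dimensional choice function `d` on `B = ∏ᵢ ᵏAᵢ / U` such that the natural
bijection `φ : ᵏA → B` (determined by
`φ(⟨s⁰/U, …, s^{k-1}/U⟩) = ⟨⟨s⁰(i), …, s^{k-1}(i)⟩ : i ∈ I⟩/U`)
is a homeomorphism from `(ᵏA, C)` onto `(B, D)`, where `D` is the
ultratopology induced by `d`. -/
theorem kdim_ultratopology_homeomorphic_onedim {I : Type*} (U : Ultrafilter I)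
    (A : I → Type*) [∀ i, Nonempty (A i)] (k : ℕ)
    (c : (Fin k → Quotient (upSetoid U A)) → ∀ i, Fin k → A i)
    (hc : ∀ a j, Quotient.mk (upSetoid U A) (fun i => c a i j) = a j) :
    ∃ (d : Quotient (upSetoid U fun i => Fin k → A i) → ∀ i, Fin k → A i)
      (φ : (Fin k → Quotient (upSetoid U A)) →
          Quotient (upSetoid U fun i => Fin k → A i)),
      (∀ b, Quotient.mk (upSetoid U fun i => Fin k → A i) (d b) = b) ∧
      (∀ s : Fin k → ∀ i, A i,
        φ (fun j => Quotient.mk (upSetoid U A) (s j)) =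
          Quotient.mk (upSetoid U fun i => Fin k → A i) (fun i j => s j i)) ∧
      @IsHomeomorph _ _ (ultraTop U c) (ultraTop U d) φ := by
  classical
  let f : (Fin k → Quotient (upSetoid U A)) → Quotient (upSetoid U fun i => Fin k → A i) :=
    fun a => Quotient.mk _ (c a)
  have key : ∀ s : Fin k → ∀ i, A i,
      f (fun j => Quotient.mk (upSetoid U A) (s j)) =
        Quotient.mk (upSetoid U fun i => Fin k → A i) (fun i j => s j i) := by
    intro s
    apply Quotient.sound
    have hE : ∀ j, {i | c (fun j => Quotient.mk (upSetoid U A) (s j)) i j = s j i} ∈ U :=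
      fun j => Quotient.exact (hc (fun j => Quotient.mk (upSetoid U A) (s j)) j)
    have hI : (⋂ j, {i | c (fun j => Quotient.mk (upSetoid U A) (s j)) i j = s j i}) ∈ U :=
      (Filter.iInter_mem).2 hE
    refine Filter.mem_of_superset hI fun i hi => ?_
    funext j
    exact Set.mem_iInter.1 hi j
  have hinj : Function.Injective f := by
    intro a a' h
    have h' : {i | c a i = c a' i} ∈ U := Quotient.exact h
    funext j
    have heq : Quotient.mk (upSetoid U A) (fun i => c a i j) =
        Quotient.mk (upSetoid U A) (fun i => c a' i j) :=
      Quotient.sound (Filter.mem_of_superset h' fun i hi => congrFun hi j)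
    rw [hc a j, hc a' j] at heq
    exact heq
  have hsurj : Function.Surjective f := by
    intro b
    induction b using Quotient.ind with
    | _ g =>
      exact ⟨fun j => Quotient.mk (upSetoid U A) (fun i => g i j), key (fun j i => g i j)⟩
  have hbij : Function.Bijective f := ⟨hinj, hsurj⟩
  let e := Equiv.ofBijective f hbij
  let d : Quotient (upSetoid U fun i => Fin k → A i) → ∀ i, Fin k → A i :=
    fun b => c (e.symm b)
  have hdf : ∀ a, d (f a) = c a := by
    intro a
    show c (e.symm (e a)) = c a
    rw [Equiv.symm_apply_apply]
  refine ⟨d, f, ?_, key, ?_⟩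
  · intro b
    show f (e.symm b) = b
    exact e.apply_symm_apply b
  · have htset : ∀ (R : Set (Quotient (upSetoid U fun i => Fin k → A i))) a,
        tset d R (f a) = tset c (f ⁻¹' R) a := by
      intro R a
      ext i
      constructor
      · rintro ⟨b, hb, hi⟩
        refine ⟨e.symm b, ?_, ?_⟩
        · show f (e.symm b) ∈ R
          rw [show f (e.symm b) = e (e.symm b) from rfl, e.apply_symm_apply]
          exact hb
        · show c (e.symm b) i = c a i
          calc c (e.symm b) i = d b i := rfl
            _ = d (f a) i := hi
            _ = c a i := by rw [hdf]
      · rintro ⟨a', ha', hi⟩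
        refine ⟨f a', ha', ?_⟩
        calc d (f a') i = c a' i := by rw [hdf]
          _ = c a i := hi
          _ = d (f a) i := by rw [hdf]
    have hopen : ∀ R : Set (Quotient (upSetoid U fun i => Fin k → A i)),
        @IsOpen _ (ultraTop U d) R ↔ @IsOpen _ (ultraTop U c) (f ⁻¹' R) := by
      intro R
      show (∀ b, tset d Rᶜ b ∈ U → b ∈ Rᶜ) ↔ (∀ a, tset c (f ⁻¹' Rᶜ) a ∈ U → a ∈ f ⁻¹' Rᶜ)
      constructor
      · intro h a ha
        exact h (f a) (by rw [htset]; exact ha)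
      · intro h b hb
        obtain ⟨a, rfl⟩ := hsurj b
        exact h a (by rw [← htset]; exact hb)
    have hcont : @Continuous _ _ (ultraTop U c) (ultraTop U d) f :=
      (@continuous_def _ _ (ultraTop U c) (ultraTop U d) f).2 fun R hR => (hopen R).1 hR
    have hmap : @IsOpenMap _ _ (ultraTop U c) (ultraTop U d) f := by
      intro s hs
      refine (hopen (f '' s)).2 ?_
      rw [Function.Injective.preimage_image hinj s]
      exact hs
    exact @IsHomeomorph.mk _ _ (ultraTop U c) (ultraTop U d) f hcont hmap hbij
end

section
/- Let I be an infinite set, U an ultrafilter on I, and ⟨n_i : i ∈ I⟩ a family of finite nonempty sets, and let A = ∏_{i∈I} n_i / U. Let ĥ be a 1-dimensional choice function on A with induced ultratopology C on A. Then the set R = { a_{i,m} : ⟨i,m⟩ ∈ G } is dense in C, where G = { ⟨i,m⟩ : i ∈ I, m ∈ n_i, and (∃ a ∈ A) â(i) = m } and, for each ⟨i,m⟩ ∈ G, a_{i,m} ∈ A is some fixed element with â_{i,m}(i) = m. In particular, there is a dense subset D of A with |D| ≤ |I|. -/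
open Set

/-- Let `A = ∏ᵢ nᵢ / U` be an ultraproduct of finite nonempty
sets over an infinite index set, with a 1-dimensional choice function `c`.
Let `G = { ⟨i,m⟩ : ∃ a ∈ A, â(i) = m }` and for each `⟨i,m⟩ ∈ G` fix
`a_{i,m} = sel ⟨i,m⟩ ∈ A` with `â_{i,m}(i) = m`. Then `R = sel '' G` is dense in
the induced ultratopology; in particular there is a dense set `D` with `|D| ≤ |I|`. -/
theorem dense_set_from_choice_function {I : Type u} [Infinite I] (U : Ultrafilter I)
    (n : I → Type u) [∀ i, Finite (n i)] [∀ i, Nonempty (n i)]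
    (c : Quotient (upSetoid U n) → ∀ i, n i)
    (hc : ∀ a, Quotient.mk (upSetoid U n) (c a) = a)
    (sel : (Σ i, n i) → Quotient (upSetoid U n))
    (hsel : ∀ p : Σ i, n i, (∃ a, c a p.1 = p.2) → c (sel p) p.1 = p.2) :
    @Dense _ (ultraTop U c) (sel '' {p : Σ i, n i | ∃ a, c a p.1 = p.2}) ∧
    ∃ D : Set (Quotient (upSetoid U n)),
      @Dense _ (ultraTop U c) D ∧ Cardinal.mk D ≤ Cardinal.mk I := by
  letI : TopologicalSpace (Quotient (upSetoid U n)) := ultraTop U c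
  set R := sel '' {p : Σ i, n i | ∃ a, c a p.1 = p.2} with hR
  have hclosed : ∀ S : Set (Quotient (upSetoid U n)), IsClosed S →
      ∀ a, tset c S a ∈ U → a ∈ S := by
    intro S hS
    have h : Sᶜᶜ ∈ {R | ∀ a, tset c R a ∈ U → a ∈ R} := hS.isOpen_compl
    rwa [compl_compl] at h
  have huniv : ∀ a, tset c R a = Set.univ := by
    intro a
    ext i
    simp only [Set.mem_univ, iff_true, tset, Set.mem_setOf_eq]
    refine ⟨sel ⟨i, c a i⟩, ⟨⟨i, c a i⟩, ⟨a, rfl⟩, rfl⟩, ?_⟩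
    exact hsel ⟨i, c a i⟩ ⟨a, rfl⟩
  have hdense : Dense R := by
    intro a
    apply hclosed (closure R) isClosed_closure a
    have hsub : tset c R a ⊆ tset c (closure R) a := by
      rintro i ⟨b, hb, he⟩
      exact ⟨b, subset_closure hb, he⟩
    exact Filter.mem_of_superset (by rw [huniv a]; exact Filter.univ_mem) hsub
  refine ⟨hdense, R, hdense, ?_⟩
  calc Cardinal.mk R ≤ Cardinal.mk (Σ i, n i) :=
        le_trans (Cardinal.mk_image_le) (Cardinal.mk_set_le _)
    _ = Cardinal.sum (fun i => Cardinal.mk (n i)) := Cardinal.mk_sigma _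
    _ ≤ Cardinal.sum (fun _ : I => Cardinal.aleph0) :=
        Cardinal.sum_le_sum _ _ (fun i => (Cardinal.lt_aleph0_of_finite (n i)).le)
    _ = Cardinal.mk I * Cardinal.aleph0 := Cardinal.sum_const' _ _
    _ = Cardinal.mk I := Cardinal.mul_aleph0_eq (Cardinal.aleph0_le_mk I)
end

section
/- Let I be a set, U an ultrafilter on I, and ⟨n_i : i ∈ I⟩ a family of finite nonempty sets such that the ultraproduct A = ∏_{i∈I} n_i / U is infinite. Let C be the ultratopology on A induced by any 1-dimensional choice function on A. Then the density of C is strictly smaller than |A|; that is, there exists a subset D ⊆ A which is dense in C and satisfies |D| < |A|. -/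
open Set

section AuxLemmas

universe u

open Cardinal

/-- Sierpiński-type lemma: over any infinite type `X` there is a `⊆`-linearly-ordered,
injectively indexed family of subsets of `X` of cardinality strictly greater than `#X`. -/
private lemma exists_big_chain (X : Type u) (hX : ℵ₀ ≤ #X) :
    ∃ (T : Type u) (g : T → Set X),
      (∀ a b, g a ⊆ g b ∨ g b ⊆ g a) ∧ Function.Injective g ∧ #X < #T := by
  classical
  set S : Set Cardinal.{u} := {μ | #X < 2 ^ μ} with hSdef
  have hSne : S.Nonempty := ⟨#X, Cardinal.cantor _⟩
  set μ0 : Cardinal.{u} := sInf S with hμ0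
  have hmem : #X < 2 ^ μ0 := csInf_mem hSne
  have hmin : ∀ ν : Cardinal.{u}, ν < μ0 → 2 ^ ν ≤ #X := by
    intro ν hν
    by_contra h
    exact notMem_of_lt_csInf hν (OrderBot.bddBelow S) (not_le.mp h)
  have hμinf : ℵ₀ ≤ μ0 := by
    by_contra h
    have h2 : (2 : Cardinal) ^ μ0 < ℵ₀ :=
      Cardinal.power_lt_aleph0 (Cardinal.nat_lt_aleph0 2) (not_le.mp h)
    exact absurd (hmem.trans (h2.trans_le hX)) (lt_irrefl _)
  have hμle : μ0 ≤ #X := csInf_le (OrderBot.bddBelow S) (Cardinal.cantor #X)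
  set J : Type u := μ0.ord.ToType with hJdef
  have hJ : #J = μ0 := by rw [hJdef, Cardinal.mk_toType, Cardinal.card_ord]
  have hwfJ : WellFounded ((· < ·) : J → J → Prop) := wellFounded_lt
  -- the "eventually absent" subsets of J
  set E : Set (Set J) := {f | ∃ β : J, ∀ γ : J, β < γ → γ ∉ f} with hEdef
  have hIic : ∀ β : J, #(Set.Iic β) < μ0 := by
    intro β
    have h1 : #(Set.Iic β) ≤ #(Set.Iio β) + 1 := by
      rw [← Set.Iio_insert]; exact Cardinal.mk_insert_le
    have h2 : #(Set.Iio β) < μ0 := Cardinal.mk_Iio_ord_toType β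
    exact h1.trans_lt
      (Cardinal.add_lt_of_lt hμinf h2 (Cardinal.one_lt_aleph0.trans_le hμinf))
  have hEβ : ∀ β : J, #({f : Set J | ∀ γ : J, β < γ → γ ∉ f}) ≤ #X := by
    intro β
    have hinj : #({f : Set J | ∀ γ : J, β < γ → γ ∉ f}) ≤ #(Set (Set.Iic β)) := by
      apply Cardinal.mk_le_of_injective
        (f := fun f : ({f : Set J | ∀ γ : J, β < γ → γ ∉ f}) =>
          ({γ : Set.Iic β | (γ : J) ∈ (f : Set J)} : Set (Set.Iic β)))
      intro f g hfg
      apply Subtype.ext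
      ext γ
      rcases le_or_gt γ β with hle | hlt
      · exact Set.ext_iff.mp hfg ⟨γ, hle⟩
      · constructor
        · intro h; exact absurd h (f.2 γ hlt)
        · intro h; exact absurd h (g.2 γ hlt)
    refine hinj.trans ?_
    rw [Cardinal.mk_set]
    exact hmin _ (hIic β)
  have hEcard : #E ≤ #X := by
    have hsub : E ⊆ ⋃ β : J, {f : Set J | ∀ γ : J, β < γ → γ ∉ f} := by
      rintro f ⟨β, hβ⟩
      exact Set.mem_iUnion.mpr ⟨β, hβ⟩
    calc #E ≤ #(⋃ β : J, {f : Set J | ∀ γ : J, β < γ → γ ∉ f}) :=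
          Cardinal.mk_le_mk_of_subset hsub
      _ ≤ Cardinal.sum (fun β : J => #({f : Set J | ∀ γ : J, β < γ → γ ∉ f})) :=
          Cardinal.mk_iUnion_le_sum_mk
      _ ≤ Cardinal.sum (fun _ : J => #X) := Cardinal.sum_le_sum _ _ hEβ
      _ = #J * #X := Cardinal.sum_const' _ _
      _ ≤ #X * #X := by rw [hJ]; exact mul_le_mul_left hμle _
      _ = #X := Cardinal.mul_eq_self hX
  -- the lexicographic strict order on subsets of J
  set llt : Set J → Set J → Prop := fun x y =>
    ∃ γ : J, γ ∉ x ∧ γ ∈ y ∧ ∀ δ : J, δ < γ → (δ ∈ x ↔ δ ∈ y) with hlltdef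
  have llt_total : ∀ x y : Set J, x ≠ y → llt x y ∨ llt y x := by
    intro x y hxy
    have hne : {γ : J | ¬(γ ∈ x ↔ γ ∈ y)}.Nonempty := by
      rcases Set.eq_empty_or_nonempty {γ : J | ¬(γ ∈ x ↔ γ ∈ y)} with he | hne
      · exfalso
        apply hxy
        ext γ
        by_contra hγ
        exact Set.notMem_empty γ (he ▸ (hγ : γ ∈ {γ : J | ¬(γ ∈ x ↔ γ ∈ y)}))
      · exact hne
    have hmem0 : ¬(hwfJ.min _ hne ∈ x ↔ hwfJ.min _ hne ∈ y) := hwfJ.min_mem _ hne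
    have hpre : ∀ δ : J, δ < hwfJ.min _ hne → (δ ∈ x ↔ δ ∈ y) := fun δ hδ =>
      not_not.mp (fun hd => hwfJ.not_lt_min _ hd hδ)
    by_cases hy : hwfJ.min _ hne ∈ y
    · have hx : hwfJ.min _ hne ∉ x := fun hx => hmem0 ⟨fun _ => hy, fun _ => hx⟩
      exact Or.inl ⟨_, hx, hy, hpre⟩
    · have hx : hwfJ.min _ hne ∈ x := by
        by_contra hx
        exact hmem0 ⟨fun h => absurd h hx, fun h => absurd h hy⟩
      exact Or.inr ⟨_, hy, hx, fun δ hδ => (hpre δ hδ).symm⟩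
  have llt_asymm : ∀ x y : Set J, llt x y → llt y x → False := by
    rintro x y ⟨γ1, h1x, h1y, p1⟩ ⟨γ2, h2y, h2x, p2⟩
    rcases lt_trichotomy γ1 γ2 with h | h | h
    · exact h1x ((p2 γ1 h).mp h1y)
    · exact h2y (h ▸ h1y)
    · exact h2y ((p1 γ2 h).mp h2x)
  have llt_trans : ∀ x y z : Set J, llt x y → llt y z → llt x z := by
    rintro x y z ⟨γ1, h1x, h1y, p1⟩ ⟨γ2, h2y, h2z, p2⟩
    rcases lt_trichotomy γ1 γ2 with h | h | h
    · exact ⟨γ1, h1x, (p2 γ1 h).mp h1y, fun δ hδ => (p1 δ hδ).trans (p2 δ (hδ.trans h))⟩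
    · exact absurd (h ▸ h1y) h2y
    · exact ⟨γ2, fun hx => h2y ((p1 γ2 h).mp hx), h2z,
        fun δ hδ => (p1 δ (hδ.trans h)).trans (p2 δ hδ)⟩
  -- the chain of cuts
  set sx : Set J → Set E := fun x => {f : E | (f : Set J) = x ∨ llt (f : Set J) x}
    with hsxdef
  have mono : ∀ x y : Set J, llt x y → sx x ⊆ sx y := by
    intro x y h f hf
    rcases hf with hf | hf
    · exact Or.inr (by rw [hf]; exact h)
    · exact Or.inr (llt_trans _ _ _ hf h)
  have hchain : ∀ x y : Set J, sx x ⊆ sx y ∨ sx y ⊆ sx x := by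
    intro x y
    by_cases hxy : x = y
    · rw [hxy]; exact Or.inl (subset_refl _)
    · rcases llt_total x y hxy with h | h
      · exact Or.inl (mono _ _ h)
      · exact Or.inr (mono _ _ h)
  have hdiff : ∀ x y : Set J, llt x y → ∃ d : E, d ∈ sx y ∧ d ∉ sx x := by
    rintro x y ⟨γ0, hγx, hγy, hpre⟩
    refine ⟨⟨{γ : J | γ ≤ γ0 ∧ γ ∈ y}, γ0, fun γ hγ hmem => (not_le.mpr hγ) hmem.1⟩, ?_, ?_⟩
    · -- d ∈ sx y
      by_cases hdy : {γ : J | γ ≤ γ0 ∧ γ ∈ y} = y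
      · exact Or.inl hdy
      · refine Or.inr ?_
        have hne : {δ : J | ¬(δ ∈ {γ : J | γ ≤ γ0 ∧ γ ∈ y} ↔ δ ∈ y)}.Nonempty := by
          rcases Set.eq_empty_or_nonempty
            {δ : J | ¬(δ ∈ {γ : J | γ ≤ γ0 ∧ γ ∈ y} ↔ δ ∈ y)} with he | hne
          · exfalso
            apply hdy
            ext δ
            by_contra hδ
            exact Set.notMem_empty δ (he ▸ (hδ :
              δ ∈ {δ : J | ¬(δ ∈ {γ : J | γ ≤ γ0 ∧ γ ∈ y} ↔ δ ∈ y)}))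
          · exact hne
        have hδmem : ¬(hwfJ.min _ hne ∈ {γ : J | γ ≤ γ0 ∧ γ ∈ y} ↔ hwfJ.min _ hne ∈ y) :=
          hwfJ.min_mem _ hne
        have hδpre : ∀ ρ : J, ρ < hwfJ.min _ hne →
            (ρ ∈ {γ : J | γ ≤ γ0 ∧ γ ∈ y} ↔ ρ ∈ y) := fun ρ hρ =>
          not_not.mp (fun hd => hwfJ.not_lt_min _ hd hρ)
        have hδgt : γ0 < hwfJ.min _ hne := by
          by_contra h
          have hle : hwfJ.min _ hne ≤ γ0 := not_lt.mp h
          exact hδmem ⟨fun hd => hd.2, fun hy => ⟨hle, hy⟩⟩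
        have hδy : hwfJ.min _ hne ∈ y := by
          by_contra hy
          exact hδmem ⟨fun hd => hd.2, fun hy' => absurd hy' hy⟩
        have hδdv : hwfJ.min _ hne ∉ {γ : J | γ ≤ γ0 ∧ γ ∈ y} := fun hd =>
          (not_le.mpr hδgt) hd.1
        exact ⟨_, hδdv, hδy, hδpre⟩
    · -- d ∉ sx x
      have hxd : llt x {γ : J | γ ≤ γ0 ∧ γ ∈ y} :=
        ⟨γ0, hγx, ⟨le_refl γ0, hγy⟩,
          fun δ hδ => (hpre δ hδ).trans ⟨fun hy => ⟨hδ.le, hy⟩, fun hd => hd.2⟩⟩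
      rintro (heq | hlt)
      · exact llt_asymm x x (heq ▸ hxd) (heq ▸ hxd)
      · exact llt_asymm _ _ hxd hlt
  obtain ⟨jE⟩ : Nonempty (E ↪ X) := (Cardinal.le_def _ _).mp hEcard
  refine ⟨Set J, fun x => jE '' (sx x), ?_, ?_, ?_⟩
  · intro a b
    rcases hchain a b with h | h
    · exact Or.inl (Set.image_mono h)
    · exact Or.inr (Set.image_mono h)
  · intro x y hxy
    by_contra hne
    have hxy' : jE '' (sx x) = jE '' (sx y) := hxy
    rcases llt_total x y hne with h | h
    · obtain ⟨d, hdy, hdx⟩ := hdiff x y h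
      have hmem1 : jE d ∈ jE '' (sx y) := ⟨d, hdy, rfl⟩
      rw [← hxy'] at hmem1
      obtain ⟨d', hd', he⟩ := hmem1
      exact hdx (jE.injective he ▸ hd')
    · obtain ⟨d, hdy, hdx⟩ := hdiff y x h
      have hmem1 : jE d ∈ jE '' (sx x) := ⟨d, hdy, rfl⟩
      rw [hxy'] at hmem1
      obtain ⟨d', hd', he⟩ := hmem1
      exact hdx (jE.injective he ▸ hd')
  · rw [Cardinal.mk_set, hJ]
    exact hmem

end AuxLemmas

/-- If `A = ∏ᵢ nᵢ / U` is an infinite ultraproduct of finite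
nonempty sets and `C` is the ultratopology induced by a 1-dimensional choice
function on `A`, then the density of `C` is strictly less than `|A|`: there is
a dense set `D ⊆ A` with `|D| < |A|`. -/
theorem density_lt_card {I : Type*} (U : Ultrafilter I)
    (n : I → Type*) [∀ i, Finite (n i)] [∀ i, Nonempty (n i)]
    (hA : Infinite (Quotient (upSetoid U n)))
    (c : Quotient (upSetoid U n) → ∀ i, n i)
    (hc : ∀ a, Quotient.mk (upSetoid U n) (c a) = a) :
    ∃ D : Set (Quotient (upSetoid U n)),
      @Dense _ (ultraTop U c) D ∧
      Cardinal.mk D < Cardinal.mk (Quotient (upSetoid U n)) := by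
  classical
  by_contra hcon
  push_neg at hcon
  let A : Type _ := Quotient (upSetoid U n)
  letI τ : TopologicalSpace A := ultraTop U c
  have hκ : Cardinal.aleph0 ≤ Cardinal.mk A := Cardinal.infinite_iff.mp hA
  have hclosed : ∀ R : Set A, IsClosed R → ∀ a, tset c R a ∈ U → a ∈ R := by
    intro R hR a ha
    have h2 : Rᶜᶜ ∈ {S : Set A | ∀ a, tset c S a ∈ U → a ∈ S} := hR.isOpen_compl
    rw [compl_compl] at h2
    exact h2 a ha
  -- every small set is non-dense, hence has a point outside its closure
  have hnd : ∀ D : Set A, Cardinal.mk D < Cardinal.mk A → ∃ a, a ∉ closure D := by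
    intro D hD
    have hnden : ¬Dense D := fun h => absurd hD (not_lt.mpr (hcon D h))
    by_contra h
    push_neg at h
    exact hnden h
  have hne : Nonempty A := ⟨Quotient.mk _ fun i => Classical.arbitrary (n i)⟩
  obtain ⟨a0⟩ := hne
  -- the well-order of type (#A).ord
  set W : Type _ := (Cardinal.mk A).ord.ToType with hWdef
  have hWcard : Cardinal.mk W = Cardinal.mk A := by
    rw [hWdef, Cardinal.mk_toType, Cardinal.card_ord]
  have hwfW : WellFounded ((· < ·) : W → W → Prop) := wellFounded_lt
  have hsmall : ∀ (w : W) (ih : ∀ v : W, v < w → A),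
      Cardinal.mk (insert a0 (Set.range fun v : Set.Iio w => ih v.1 v.2) : Set A)
        < Cardinal.mk A := by
    intro w ih
    have h1 : Cardinal.mk (Set.range fun v : Set.Iio w => ih v.1 v.2) ≤
        Cardinal.mk (Set.Iio w) := Cardinal.mk_range_le
    refine lt_of_le_of_lt Cardinal.mk_insert_le ?_
    exact Cardinal.add_lt_of_lt hκ (h1.trans_lt (Cardinal.mk_Iio_ord_toType w))
      (Cardinal.one_lt_aleph0.trans_le hκ)
  set step : ∀ w : W, (∀ v : W, v < w → A) → A := fun w ih =>
    Classical.choose (hnd (insert a0 (Set.range fun v : Set.Iio w => ih v.1 v.2))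
      (hsmall w ih)) with hstepdef
  set F : W → A := hwfW.fix step with hFdef
  have hFeq : ∀ w, F w = step w fun v _ => F v := fun w => hwfW.fix_eq step w
  set Dw : W → Set A := fun w => insert a0 (Set.range fun v : Set.Iio w => F v.1)
    with hDwdef
  have hkey : ∀ w, F w ∉ closure (Dw w) := by
    intro w
    rw [hFeq w]
    exact Classical.choose_spec
      (hnd (insert a0 (Set.range fun v : Set.Iio w => F v.1))
        (hsmall w (fun v _ => F v)))
  set Z : W → Set I := fun w => (tset c (closure (Dw w)) (F w))ᶜ with hZdef
  have hZU : ∀ w, Z w ∈ U := fun w =>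
    Ultrafilter.compl_mem_iff_notMem.mpr fun ht =>
      hkey w (hclosed _ isClosed_closure _ ht)
  have hfresh : ∀ w, ∀ i ∈ Z w, ∀ b ∈ closure (Dw w), c b i ≠ c (F w) i := by
    intro w i hi b hb heq
    exact hi ⟨b, hb, heq⟩
  have ha0cl : ∀ w, a0 ∈ closure (Dw w) := fun w =>
    subset_closure (Set.mem_insert _ _)
  have hFvcl : ∀ v w : W, v < w → F v ∈ closure (Dw w) := fun v w h =>
    subset_closure (Set.mem_insert_iff.mpr (Or.inr ⟨⟨v, h⟩, rfl⟩))
  -- counting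
  set k : I → ℕ := fun i => Nat.card (n i) with hkdef
  set eqv : ∀ i, n i ≃ Fin (k i) := fun i => Finite.equivFin (n i) with heqvdef
  set Fs : I → Set W := fun i => {w | i ∈ Z w} with hFsdef
  have hinj : ∀ i, Set.InjOn (fun w => c (F w) i) (Fs i) := by
    intro i v hv w hw hvw
    by_contra hvwne
    rcases lt_or_gt_of_ne hvwne with h | h
    · exact hfresh w i hw (F v) (hFvcl v w h) hvw
    · exact hfresh v i hv (F w) (hFvcl w v h) hvw.symm
  have hFsfin : ∀ i, (Fs i).Finite := by
    intro i
    exact Set.Finite.of_finite_image (Set.toFinite _) (hinj i)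
  have hcard : ∀ i (s : Set W), ((Fs i) ∩ s).ncard < k i := by
    intro i s
    have h1 : ((Fs i) ∩ s).ncard ≤ (Fs i).ncard :=
      Set.ncard_le_ncard Set.inter_subset_left (hFsfin i)
    have h2 : (Fs i).ncard = ((fun w => c (F w) i) '' (Fs i)).ncard :=
      (Set.ncard_image_of_injOn (hinj i)).symm
    have h3 : ((fun w => c (F w) i) '' (Fs i)) ⊆ {x : n i | x ≠ c a0 i} := by
      rintro x ⟨w, hw, rfl⟩
      exact (hfresh w i hw a0 (ha0cl w)).symm
    have h4 : ((fun w => c (F w) i) '' (Fs i)).ncard ≤ {x : n i | x ≠ c a0 i}.ncard :=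
      Set.ncard_le_ncard h3 (Set.toFinite _)
    have h5 : {x : n i | x ≠ c a0 i}.ncard < (Set.univ : Set (n i)).ncard := by
      refine Set.ncard_lt_ncard (Set.ssubset_univ_iff.mpr ?_) (Set.toFinite _)
      intro h
      exact (Set.ext_iff.mp h (c a0 i)).mpr trivial rfl
    have h6 : (Set.univ : Set (n i)).ncard = k i := Set.ncard_univ _
    calc ((Fs i) ∩ s).ncard ≤ (Fs i).ncard := h1
      _ = ((fun w => c (F w) i) '' (Fs i)).ncard := h2
      _ ≤ {x : n i | x ≠ c a0 i}.ncard := h4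
      _ < (Set.univ : Set (n i)).ncard := h5
      _ = k i := h6
  set Φ : Set W → A := fun s =>
    Quotient.mk (upSetoid U n) fun i => (eqv i).symm ⟨((Fs i) ∩ s).ncard, hcard i s⟩
    with hΦdef
  have hΦne : ∀ s t : Set W, s ⊆ t → (∃ v, v ∈ t ∧ v ∉ s) → Φ s ≠ Φ t := by
    rintro s t hst ⟨v, hvt, hvs⟩ heq
    have hsim : {i : I | (eqv i).symm ⟨((Fs i) ∩ s).ncard, hcard i s⟩ =
        (eqv i).symm ⟨((Fs i) ∩ t).ncard, hcard i t⟩} ∈ U := Quotient.exact heq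
    have hint : ({i : I | (eqv i).symm ⟨((Fs i) ∩ s).ncard, hcard i s⟩ =
        (eqv i).symm ⟨((Fs i) ∩ t).ncard, hcard i t⟩} ∩ Z v).Nonempty :=
      Filter.nonempty_of_mem (Filter.inter_mem hsim (hZU v))
    obtain ⟨i, hi1, hi2⟩ := hint
    have hFinEq : ((Fs i) ∩ s).ncard = ((Fs i) ∩ t).ncard := by
      have hval := (eqv i).symm.injective hi1
      exact congrArg Fin.val hval
    have hlt : ((Fs i) ∩ s).ncard < ((Fs i) ∩ t).ncard := by
      refine Set.ncard_lt_ncard ?_ ((hFsfin i).inter_of_left t)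
      refine (Set.ssubset_iff_of_subset (Set.inter_subset_inter_right _ hst)).mpr ?_
      exact ⟨v, ⟨hi2, hvt⟩, fun hv => hvs hv.2⟩
    omega
  -- the big chain gives a contradiction
  obtain ⟨T, g, hgchain, hginj, hT⟩ := exists_big_chain W (by rw [hWcard]; exact hκ)
  have hGinj : Function.Injective (fun t => Φ (g t)) := by
    intro t1 t2 h12
    by_contra hne12
    rcases hgchain t1 t2 with hsub | hsub
    · have hne' : g t1 ≠ g t2 := fun he => hne12 (hginj he)
      obtain ⟨v, hvt, hvs⟩ : ∃ v, v ∈ g t2 ∧ v ∉ g t1 := by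
        by_contra hcc
        push_neg at hcc
        exact hne' (Set.Subset.antisymm hsub hcc)
      exact hΦne _ _ hsub ⟨v, hvt, hvs⟩ h12
    · have hne' : g t2 ≠ g t1 := fun he => hne12 (hginj he).symm
      obtain ⟨v, hvt, hvs⟩ : ∃ v, v ∈ g t1 ∧ v ∉ g t2 := by
        by_contra hcc
        push_neg at hcc
        exact hne' (Set.Subset.antisymm hsub hcc)
      exact hΦne _ _ hsub ⟨v, hvt, hvs⟩ h12.symm
  have hle : Cardinal.mk T ≤ Cardinal.mk A := Cardinal.mk_le_of_injective hGinj
  rw [hWcard] at hT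
  exact absurd hT (not_lt.mpr hle)
end

section
/- Let k be a natural number, let I be a set, U an ultrafilter on I, and ⟨n_i : i ∈ I⟩ a family of finite nonempty sets such that the ultraproduct A = ∏_{i∈I} n_i / U is infinite. Let C be the ultratopology on ᵏA induced by any k-dimensional choice function on A. Then the density of C is strictly smaller than |A|; that is, there exists a subset D ⊆ ᵏA which is dense in C and satisfies |D| < |A|. -/
open Set

section UltraDensityAux

open Cardinal Function

universe u v w

/-- Key combinatorial lemma: given an "honest choice" structure on a type `Q'`
(abstracting k-tuples of an ultraproduct), there is a set `E` of cardinality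
less than `#Q'` whose chosen representatives realize, on a `U`-large set of
coordinates, every possible value. -/
private theorem aux_exists_small {I : Type u} (U : Ultrafilter I) {S : I → Type v}
    [∀ i, Finite (S i)] [∀ i, Nonempty (S i)] {Q' : Type w} [Infinite Q']
    (c : Q' → ∀ i, S i) (mkt : (∀ i, S i) → Q')
    (hA : ∀ f, {i | c (mkt f) i = f i} ∈ U)
    (hB : ∀ f g, mkt f = mkt g → {i | f i = g i} ∈ U) :
    ∃ E : Set Q', Cardinal.mk E < Cardinal.mk Q' ∧
      {i | ∀ v : S i, ∃ b ∈ E, c b i = v} ∈ U := by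
  classical
  by_contra hcon
  push_neg at hcon
  have H : ∀ E : Set Q', Cardinal.mk E < Cardinal.mk Q' →
      {i | ∀ v : S i, ∃ b ∈ E, c b i = v}ᶜ ∈ U := fun E hE =>
    Ultrafilter.compl_mem_iff_notMem.mpr (hcon E hE)
  obtain ⟨a₀⟩ : Nonempty Q' := inferInstance
  obtain ⟨r, wo, hr⟩ := Cardinal.ord_eq Q'
  haveI : IsWellOrder Q' r := wo
  have hwf : WellFounded r := IsWellFounded.wf
  have hseg : ∀ x : Q', Cardinal.mk {y : Q' // r y x} < Cardinal.mk Q' := by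
    intro x
    have h1 : (Ordinal.typein r).toRelEmbedding x < (Cardinal.mk Q').ord := by
      rw [hr]; exact Ordinal.typein_lt_type r x
    have h2 := Cardinal.lt_ord.mp h1
    exact h2
  -- Phase 1 : transfinite greedy construction
  let F : Q' → ∀ i, S i := hwf.fix (fun x IH => fun i =>
      if hP : ∃ v : S i, ∀ b ∈ insert a₀ (Set.range fun y : {y : Q' // r y x} => mkt (IH y.1 y.2)),
          c b i ≠ v then hP.choose else Classical.arbitrary (S i))
  let Ex : Q' → Set Q' := fun x => insert a₀ (Set.range fun y : {y : Q' // r y x} => mkt (F y.1))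
  have hFeq : ∀ x i (hP : ∃ v : S i, ∀ b ∈ Ex x, c b i ≠ v), F x i = hP.choose := by
    intro x i hP
    have h0 : F x = (fun (x : Q') (IH : ∀ y, r y x → ∀ i, S i) => fun i =>
      if hP : ∃ v : S i, ∀ b ∈ insert a₀ (Set.range fun y : {y : Q' // r y x} => mkt (IH y.1 y.2)),
          c b i ≠ v then hP.choose else Classical.arbitrary (S i)) x (fun y _ => F y) :=
      hwf.fix_eq _ x
    rw [h0]
    exact dif_pos hP
  have keyZ : ∀ x i, (¬ ∀ v : S i, ∃ b ∈ Ex x, c b i = v) → ∀ b ∈ Ex x, c b i ≠ F x i := by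
    intro x i hi
    have hP : ∃ v : S i, ∀ b ∈ Ex x, c b i ≠ v := by push_neg at hi; exact hi
    rw [hFeq x i hP]
    exact hP.choose_spec
  have hExcard : ∀ x : Q', Cardinal.mk (Ex x) < Cardinal.mk Q' := by
    intro x
    have h1 : Cardinal.mk (Ex x) ≤
        Cardinal.mk (Set.range fun y : {y : Q' // r y x} => mkt (F y.1)) + 1 :=
      Cardinal.mk_insert_le
    have h2 : Cardinal.mk (Set.range fun y : {y : Q' // r y x} => mkt (F y.1)) ≤
        Cardinal.mk {y : Q' // r y x} := Cardinal.mk_range_le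
    refine lt_of_le_of_lt (h1.trans (add_le_add_left h2 1)) ?_
    exact Cardinal.add_lt_of_lt (Cardinal.aleph0_le_mk Q') (hseg x)
      (lt_of_lt_of_le Cardinal.one_lt_aleph0 (Cardinal.aleph0_le_mk Q'))
  let Z : Q' → Set I := fun x => {i | ∀ v : S i, ∃ b ∈ Ex x, c b i = v}ᶜ
  have hZU : ∀ x, Z x ∈ U := fun x => H _ (hExcard x)
  let X : Q' → Set I := fun x => {i | c (mkt (F x)) i = F x i}
  have hXU : ∀ x, X x ∈ U := fun x => hA (F x)
  let Y : Q' → Set I := fun x => Z x ∩ X x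
  have hYU : ∀ x, Y x ∈ U := fun x => Filter.inter_mem (hZU x) (hXU x)
  have hne0 : ∀ i x, i ∈ Y x → F x i ≠ c a₀ i := by
    intro i x hix
    exact (keyZ x i hix.1 a₀ (Set.mem_insert _ _)).symm
  have hne1 : ∀ i x x', r x' x → i ∈ Y x → i ∈ Y x' → F x i ≠ F x' i := by
    intro i x x' hrx hix hix'
    have h1 : mkt (F x') ∈ Ex x := Set.mem_insert_iff.mpr (Or.inr ⟨⟨x', hrx⟩, rfl⟩)
    have h2 : c (mkt (F x')) i ≠ F x i := keyZ x i hix.1 _ h1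
    have h3 : c (mkt (F x')) i = F x' i := hix'.2
    rw [h3] at h2
    exact fun h => h2 h.symm
  have hinjS : ∀ i, Function.Injective fun x : {x : Q' // i ∈ Y x} => F x.1 i := by
    intro i x x' heq
    rcases trichotomous_of r x.1 x'.1 with h | h | h
    · exact absurd heq.symm (hne1 i x'.1 x.1 h x'.2 x.2)
    · exact Subtype.ext h
    · exact absurd heq (hne1 i x.1 x'.1 h x.2 x'.2)
  haveI hfin : ∀ i : I, Finite {x : Q' // i ∈ Y x} := fun i => Finite.of_injective _ (hinjS i)
  have hcap : ∀ i : I, Nat.card {x : Q' // i ∈ Y x} + 1 ≤ Nat.card (S i) := by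
    intro i
    have hoi : Function.Injective fun o : Option {x : Q' // i ∈ Y x} =>
        o.elim (c a₀ i) fun x => F x.1 i := by
      intro o o' heq
      match o, o' with
      | none, none => rfl
      | none, some x => exact absurd heq.symm (hne0 i x.1 x.2)
      | some x, none => exact absurd heq (hne0 i x.1 x.2)
      | some x, some x' => exact congrArg some (hinjS i heq)
    have hle := Nat.card_le_card_of_injective _ hoi
    have hcard : Nat.card (Option {x : Q' // i ∈ Y x}) = Nat.card {x : Q' // i ∈ Y x} + 1 := by
      have : Fintype {x : Q' // i ∈ Y x} := Fintype.ofFinite _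
      simp [Nat.card_eq_fintype_card]
    rwa [hcard] at hle
  -- Phase 2 : produce (#Q')⁺ pairwise distinct elements, contradiction
  let T2 : Type w := (Order.succ (Cardinal.mk Q')).out
  have hT2 : Cardinal.mk T2 = Order.succ (Cardinal.mk Q') := Cardinal.mk_out _
  obtain ⟨r2, wo2, hr2⟩ := Cardinal.ord_eq T2
  haveI : IsWellOrder T2 r2 := wo2
  have hwf2 : WellFounded r2 := IsWellFounded.wf
  have hseg2 : ∀ ξ : T2, Cardinal.mk {η : T2 // r2 η ξ} ≤ Cardinal.mk Q' := by
    intro ξ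
    have h1 : (Ordinal.typein r2).toRelEmbedding ξ < (Cardinal.mk T2).ord := by
      rw [hr2]; exact Ordinal.typein_lt_type r2 ξ
    have h2 := Cardinal.lt_ord.mp h1
    rw [hT2] at h2
    exact Order.lt_succ_iff.mp h2
  let πf : ∀ ξ : T2, {η : T2 // r2 η ξ} ↪ Q' := fun ξ =>
    Classical.choice ((Cardinal.le_def _ _).mp (hseg2 ξ))
  let G : T2 → ∀ i, S i := hwf2.fix (fun ξ IH => fun i =>
      if hP : ∃ v : S i, ∀ η : {η : T2 // r2 η ξ}, i ∈ Y (πf ξ η) → IH η.1 η.2 i ≠ v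
      then hP.choose else Classical.arbitrary (S i))
  have hGeq : ∀ ξ i (hP : ∃ v : S i, ∀ η : {η : T2 // r2 η ξ}, i ∈ Y (πf ξ η) → G η.1 i ≠ v),
      G ξ i = hP.choose := by
    intro ξ i hP
    have h0 : G ξ = (fun (ξ : T2) (IH : ∀ η, r2 η ξ → ∀ i, S i) => fun i =>
      if hP : ∃ v : S i, ∀ η : {η : T2 // r2 η ξ}, i ∈ Y (πf ξ η) → IH η.1 η.2 i ≠ v
      then hP.choose else Classical.arbitrary (S i)) ξ (fun η _ => G η) :=
      hwf2.fix_eq _ ξ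
    rw [h0]
    exact dif_pos hP
  have hGP : ∀ ξ i, ∃ v : S i, ∀ η : {η : T2 // r2 η ξ}, i ∈ Y (πf ξ η) → G η.1 i ≠ v := by
    intro ξ i
    by_contra hnex
    push_neg at hnex
    have hinj2 : Function.Injective fun v : S i =>
        (⟨πf ξ (hnex v).choose, ((hnex v).choose_spec).1⟩ : {x : Q' // i ∈ Y x}) := by
      intro v v' heq
      have h1 : (hnex v).choose = (hnex v').choose :=
        (πf ξ).injective (congrArg Subtype.val heq)
      have h2 := ((hnex v).choose_spec).2
      have h3 := ((hnex v').choose_spec).2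
      rw [← h2, ← h3, h1]
    have hle := Nat.card_le_card_of_injective _ hinj2
    have := hcap i
    omega
  have hGspec : ∀ ξ i (η : {η : T2 // r2 η ξ}), i ∈ Y (πf ξ η) → G η.1 i ≠ G ξ i := by
    intro ξ i η hiY
    rw [hGeq ξ i (hGP ξ i)]
    exact (hGP ξ i).choose_spec η hiY
  have key : ∀ a b : T2, r2 b a → mkt (G a) ≠ mkt (G b) := by
    intro a b hab heq2
    have hU1 := hB _ _ heq2
    have hU2 := hYU (πf a ⟨b, hab⟩)
    obtain ⟨i, hi⟩ := Ultrafilter.nonempty_of_mem (Filter.inter_mem hU1 hU2)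
    exact hGspec a i ⟨b, hab⟩ hi.2 (hi.1 : G a i = G b i).symm
  have hinj3 : Function.Injective fun ξ : T2 => mkt (G ξ) := by
    intro ξ ξ' heq
    by_contra hneq
    rcases trichotomous_of r2 ξ ξ' with h | h | h
    · exact key ξ' ξ h heq.symm
    · exact hneq h
    · exact key ξ ξ' h heq
  have hle := Cardinal.mk_le_of_injective hinj3
  rw [hT2] at hle
  exact absurd hle (not_le.mpr (Order.lt_succ (Cardinal.mk Q')))

end UltraDensityAux


/-- If `A = ∏ᵢ nᵢ / U` is an infinite ultraproduct of finite
nonempty sets and `C` is the ultratopology on `ᵏA` induced by a `k`-dimensional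
choice function on `A`, then the density of `C` is strictly less than `|A|`:
there is a dense set `D ⊆ ᵏA` with `|D| < |A|`. -/
theorem density_lt_card_kdim {I : Type*} (k : ℕ) (U : Ultrafilter I)
    (n : I → Type*) [∀ i, Finite (n i)] [∀ i, Nonempty (n i)]
    (hA : Infinite (Quotient (upSetoid U n)))
    (c : (Fin k → Quotient (upSetoid U n)) → ∀ i, Fin k → n i)
    (hc : ∀ a j, Quotient.mk (upSetoid U n) (fun i => c a i j) = a j) :
    ∃ D : Set (Fin k → Quotient (upSetoid U n)),
      @Dense _ (ultraTop U c) D ∧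
      Cardinal.mk D < Cardinal.mk (Quotient (upSetoid U n)) := by
  classical
  rcases Nat.eq_zero_or_pos k with hk | hk
  · subst hk
    refine ⟨Set.univ, @dense_univ _ (ultraTop U c), ?_⟩
    have h1 : Cardinal.mk (↥(Set.univ : Set (Fin 0 → Quotient (upSetoid U n)))) = 1 := by
      rw [Cardinal.mk_univ]
      exact Cardinal.mk_eq_one _
    rw [h1]
    exact lt_of_lt_of_le Cardinal.one_lt_aleph0 (Cardinal.aleph0_le_mk _)
  · haveI : Nonempty (Fin k) := ⟨⟨0, hk⟩⟩
    haveI : Infinite (Fin k → Quotient (upSetoid U n)) :=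
      Infinite.of_injective (fun q _ => q) fun a b h => congrFun h ⟨0, hk⟩
    set mkt : (∀ i, Fin k → n i) → (Fin k → Quotient (upSetoid U n)) :=
      fun f j => Quotient.mk (upSetoid U n) fun i => f i j with hmkt
    have hAx : ∀ f, {i | c (mkt f) i = f i} ∈ U := by
      intro f
      have hj : ∀ j : Fin k, {i | c (mkt f) i j = f i j} ∈ U := by
        intro j
        have h2 : Quotient.mk (upSetoid U n) (fun i => c (mkt f) i j)
            = Quotient.mk (upSetoid U n) (fun i => f i j) := hc (mkt f) j
        exact Quotient.exact h2
      have hint : (⋂ j : Fin k, {i | c (mkt f) i j = f i j}) ∈ U := Filter.iInter_mem.mpr hj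
      refine Filter.mem_of_superset hint fun i hi => ?_
      show c (mkt f) i = f i
      funext j
      exact Set.mem_iInter.mp hi j
    have hBx : ∀ f g, mkt f = mkt g → {i | f i = g i} ∈ U := by
      intro f g hfg
      have hj : ∀ j : Fin k, {i | f i j = g i j} ∈ U := by
        intro j
        have h2 : Quotient.mk (upSetoid U n) (fun i => f i j)
            = Quotient.mk (upSetoid U n) (fun i => g i j) := congrFun hfg j
        exact Quotient.exact h2
      have hint : (⋂ j : Fin k, {i | f i j = g i j}) ∈ U := Filter.iInter_mem.mpr hj
      refine Filter.mem_of_superset hint fun i hi => ?_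
      show f i = g i
      funext j
      exact Set.mem_iInter.mp hi j
    obtain ⟨E, hE1, hE2⟩ := aux_exists_small U c mkt hAx hBx
    refine ⟨E, ?_, ?_⟩
    · letI : TopologicalSpace (Fin k → Quotient (upSetoid U n)) := ultraTop U c
      rw [dense_iff_closure_eq]
      apply Set.eq_univ_of_forall
      intro a
      have hcl : IsClosed (closure E) := isClosed_closure
      have h3 : ((closure E)ᶜ)ᶜ ∈ {R : Set (Fin k → Quotient (upSetoid U n)) |
          ∀ a, tset c R a ∈ U → a ∈ R} := hcl.isOpen_compl
      rw [compl_compl] at h3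
      refine h3 a (Filter.mem_of_superset hE2 fun i hi => ?_)
      obtain ⟨b, hb, heq⟩ := hi (c a i)
      exact ⟨b, subset_closure hb, heq⟩
    · have hQcard : Cardinal.mk (Fin k → Quotient (upSetoid U n))
          = Cardinal.mk (Quotient (upSetoid U n)) := by
        rw [Cardinal.mk_arrow, Cardinal.mk_fin, Cardinal.lift_natCast, Cardinal.lift_id']
        exact Cardinal.power_nat_eq (Cardinal.aleph0_le_mk _) hk
      rw [← hQcard]
      exact hE1
end
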